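/- For 0 < α < 1, the function a₁(α,y) := α·log(α√y + √(y-1+α²)) - log(√y + √(y-1+α²)) - (α/2)·log(1-y) + ((1-α)/2)·log(1-α²), defined for 1-α² < y < 1, satisfies lim_{y→(1-α²)⁺} a₁(α,y) = 0 and lim_{y→(1-α²)⁺} a₁(α,y)/(y-1+α²)^{3/2} = 1/(3α²√(1-α²)). -/

import Mathlib

open Filter Set

/-- a₁(α,y) = α log(α√y + √(y-1+α²)) - log(√y + √(y-1+α²)) - (α/2) log(1-y)
    + ((1-α)/2) log(1-α²). -/
noncomputable def a1 (α y : ℝ) : ℝ :=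
  α * Real.log (α * Real.sqrt y + Real.sqrt (y - 1 + α ^ 2)) -
    Real.log (Real.sqrt y + Real.sqrt (y - 1 + α ^ 2)) -
    (α / 2) * Real.log (1 - y) + ((1 - α) / 2) * Real.log (1 - α ^ 2)

noncomputable def ww (α s : ℝ) : ℝ := Real.sqrt (1 - α ^ 2 + s ^ 2)

noncomputable def ff (α s : ℝ) : ℝ :=
  α * Real.log (α * ww α s + s) - Real.log (ww α s + s) -
    (α / 2) * Real.log (α ^ 2 - s ^ 2) + ((1 - α) / 2) * Real.log (1 - α ^ 2)

noncomputable def gg (α s : ℝ) : ℝ :=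
  α / (α ^ 2 - s ^ 2) - (1 - α ^ 2) / (ww α s * (α * ww α s + s))

section aux
variable {α : ℝ} (hα0 : 0 < α) (hα1 : α < 1)

lemma hc_pos (hα0 : 0 < α) (hα1 : α < 1) : (0:ℝ) < 1 - α ^ 2 := by nlinarith

lemma ww_pos (hα0 : 0 < α) (hα1 : α < 1) (s : ℝ) : 0 < ww α s :=
  Real.sqrt_pos.mpr (by nlinarith [sq_nonneg s])

lemma ww_sq (hα0 : 0 < α) (hα1 : α < 1) (s : ℝ) : ww α s ^ 2 = 1 - α ^ 2 + s ^ 2 :=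
  Real.sq_sqrt (by nlinarith [sq_nonneg s])

lemma hasDerivAt_ww (hα0 : 0 < α) (hα1 : α < 1) (s : ℝ) :
    HasDerivAt (ww α) (s / ww α s) s := by
  have h : HasDerivAt (fun s : ℝ => 1 - α ^ 2 + s ^ 2) (2 * s) s := by
    simpa using ((hasDerivAt_pow 2 s).const_add (1 - α ^ 2))
  have hne : (1 - α ^ 2 + s ^ 2) ≠ 0 := by nlinarith [sq_nonneg s]
  have := h.sqrt hne
  convert this using 1
  have hw := ww_pos hα0 hα1 s
  unfold ww at *
  field_simp
  simp only [ww]; ring_nf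

lemma ww_zero : ww α 0 = Real.sqrt (1 - α ^ 2) := by unfold ww; norm_num

lemma ff_zero (hα0 : 0 < α) (hα1 : α < 1) : ff α 0 = 0 := by
  have hc := hc_pos hα0 hα1
  have hs : Real.sqrt (1 - α ^ 2) > 0 := Real.sqrt_pos.mpr hc
  unfold ff
  rw [ww_zero, add_zero, add_zero,
    Real.log_mul (ne_of_gt hα0) (ne_of_gt hs), Real.log_sqrt hc.le,
    show α ^ 2 - (0:ℝ) ^ 2 = α ^ 2 by ring, Real.log_pow]
  push_cast
  ring

lemma gg_zero (hα0 : 0 < α) (hα1 : α < 1) : gg α 0 = 0 := by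
  have hc := hc_pos hα0 hα1
  have hs : Real.sqrt (1 - α ^ 2) > 0 := Real.sqrt_pos.mpr hc
  have hsq : Real.sqrt (1 - α ^ 2) ^ 2 = 1 - α ^ 2 := Real.sq_sqrt hc.le
  unfold gg
  rw [ww_zero]
  field_simp
  nlinarith [hsq]

lemma hasDerivAt_ff (hα0 : 0 < α) (hα1 : α < 1) (s : ℝ) (hs0 : 0 ≤ s) (hsα : s < α) :
    HasDerivAt (ff α) (s * gg α s) s := by
  have hw := hasDerivAt_ww hα0 hα1 s
  have hwpos := ww_pos hα0 hα1 s
  have h1 : HasDerivAt (fun s => α * ww α s + s) (α * (s / ww α s) + 1) s :=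
    (hw.const_mul α).add (hasDerivAt_id s)
  have pos1 : 0 < α * ww α s + s := by positivity
  have h2 : HasDerivAt (fun s => ww α s + s) (s / ww α s + 1) s :=
    hw.add (hasDerivAt_id s)
  have pos2 : 0 < ww α s + s := by positivity
  have h3 : HasDerivAt (fun s : ℝ => α ^ 2 - s ^ 2) (-(2 * s)) s := by
    simpa using ((hasDerivAt_pow 2 s).const_sub (α ^ 2))
  have pos3 : 0 < α ^ 2 - s ^ 2 := by nlinarith
  have total : HasDerivAt (ff α)
      (α * ((α * (s / ww α s) + 1) / (α * ww α s + s)) -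
        (s / ww α s + 1) / (ww α s + s) -
        (α / 2) * (-(2 * s) / (α ^ 2 - s ^ 2)) + 0) s := by
    exact (((h1.log (ne_of_gt pos1)).const_mul α).sub (h2.log (ne_of_gt pos2)) |>.sub
      ((h3.log (ne_of_gt pos3)).const_mul (α / 2))).add (hasDerivAt_const s _)
  convert total using 1
  unfold gg
  field_simp
  ring

lemma hasDerivAt_gg (hα0 : 0 < α) (hα1 : α < 1) :
    HasDerivAt (gg α) (1 / (α ^ 2 * Real.sqrt (1 - α ^ 2))) 0 := by
  have hc := hc_pos hα0 hα1
  have hw := hasDerivAt_ww hα0 hα1 0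
  have hwpos := ww_pos hα0 hα1 0
  have h3 : HasDerivAt (fun s : ℝ => α ^ 2 - s ^ 2) (-(2 * 0)) 0 := by
    simpa using ((hasDerivAt_pow 2 (0:ℝ)).const_sub (α ^ 2))
  have pos3 : (0:ℝ) < α ^ 2 - 0 ^ 2 := by nlinarith
  have hD : HasDerivAt (fun s => ww α s * (α * ww α s + s))
      ((0 / ww α 0) * (α * ww α 0 + 0) + ww α 0 * (α * (0 / ww α 0) + 1)) 0 :=
    hw.mul ((hw.const_mul α).add (hasDerivAt_id 0))
  have posD : 0 < ww α 0 * (α * ww α 0 + 0) := by positivity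
  have h1 : HasDerivAt (fun s : ℝ => α / (α ^ 2 - s ^ 2))
      ((0 * (α ^ 2 - 0 ^ 2) - α * (-(2 * 0))) / (α ^ 2 - 0 ^ 2) ^ 2) 0 :=
    (hasDerivAt_const 0 α).div h3 (ne_of_gt pos3)
  have h2 : HasDerivAt (fun s => (1 - α ^ 2) / (ww α s * (α * ww α s + s)))
      ((0 * (ww α 0 * (α * ww α 0 + 0)) - (1 - α ^ 2) *
        ((0 / ww α 0) * (α * ww α 0 + 0) + ww α 0 * (α * (0 / ww α 0) + 1))) /
        (ww α 0 * (α * ww α 0 + 0)) ^ 2) 0 :=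
    (hasDerivAt_const 0 (1 - α ^ 2)).div hD (ne_of_gt posD)
  have total := h1.sub h2
  convert total using 1
  · rfl
  · rfl
  · rfl
  rw [ww_zero] at *
  have hs : Real.sqrt (1 - α ^ 2) > 0 := Real.sqrt_pos.mpr hc
  have hsq : Real.sqrt (1 - α ^ 2) ^ 2 = 1 - α ^ 2 := Real.sq_sqrt hc.le
  field_simp
  nlinarith [hsq, hs, congrArg (fun t => α ^ 6 * Real.sqrt (1 - α ^ 2) ^ 2 * t) hsq]

lemma a1_eq (hα0 : 0 < α) (hα1 : α < 1) (y : ℝ) (hy : 1 - α ^ 2 ≤ y) :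
    a1 α y = ff α (Real.sqrt (y - (1 - α ^ 2))) := by
  have hnn : 0 ≤ y - (1 - α ^ 2) := by linarith
  have hsq : Real.sqrt (y - (1 - α ^ 2)) ^ 2 = y - (1 - α ^ 2) := Real.sq_sqrt hnn
  unfold a1 ff
  have h1 : ww α (Real.sqrt (y - (1 - α ^ 2))) = Real.sqrt y := by
    unfold ww; rw [hsq]; congr 1; ring
  have h2 : Real.sqrt (y - 1 + α ^ 2) = Real.sqrt (y - (1 - α ^ 2)) := by
    congr 1; ring
  have h3 : α ^ 2 - Real.sqrt (y - (1 - α ^ 2)) ^ 2 = 1 - y := by rw [hsq]; ring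
  rw [h1, h2, h3]

lemma ff_tendsto (hα0 : 0 < α) (hα1 : α < 1) :
    Tendsto (ff α) (nhdsWithin 0 (Ioi 0)) (nhds 0) := by
  have hc := hc_pos hα0 hα1
  have hs : Real.sqrt (1 - α ^ 2) > 0 := Real.sqrt_pos.mpr hc
  have hwc : Continuous (ww α) := by
    unfold ww; exact (continuous_const.add (continuous_pow 2)).sqrt
  have hcont : ContinuousAt (ff α) 0 := by
    unfold ff
    have c1 : ContinuousAt (fun s => α * ww α s + s) 0 :=
      ((hwc.continuousAt.const_mul α).add continuousAt_id)
    have c2 : ContinuousAt (fun s => ww α s + s) 0 :=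
      (hwc.continuousAt.add continuousAt_id)
    have c3 : ContinuousAt (fun s : ℝ => α ^ 2 - s ^ 2) 0 :=
      (continuousAt_const.sub (continuous_pow 2).continuousAt)
    have n1 : α * ww α 0 + 0 ≠ 0 := by
      rw [ww_zero, add_zero]; exact ne_of_gt (mul_pos hα0 hs)
    have n2 : ww α 0 + 0 ≠ 0 := by rw [ww_zero, add_zero]; exact ne_of_gt hs
    have n3 : α ^ 2 - (0:ℝ) ^ 2 ≠ 0 := ne_of_gt (by nlinarith [pow_pos hα0 2])
    exact ((((c1.log n1).const_mul α).sub (c2.log n2)).sub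
      ((c3.log n3).const_mul (α / 2))).add continuousAt_const
  have := hcont.tendsto.mono_left (nhdsWithin_le_nhds (s := Ioi (0:ℝ)))
  rwa [ff_zero hα0 hα1] at this

end aux

theorem a1_vanishing_and_expansion (α : ℝ) (hα0 : 0 < α) (hα1 : α < 1) :
    Tendsto (a1 α) (nhdsWithin (1 - α ^ 2) (Ioi (1 - α ^ 2))) (nhds 0) ∧
    Tendsto (fun y => a1 α y / (y - 1 + α ^ 2) ^ ((3 : ℝ) / 2))
      (nhdsWithin (1 - α ^ 2) (Ioi (1 - α ^ 2)))
      (nhds (1 / (3 * α ^ 2 * Real.sqrt (1 - α ^ 2)))) := by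
  have hc := hc_pos hα0 hα1
  set c := 1 - α ^ 2 with hcdef
  -- the substitution map
  have hsub : Tendsto (fun y => Real.sqrt (y - c)) (nhdsWithin c (Ioi c))
      (nhdsWithin 0 (Ioi 0)) := by
    apply tendsto_nhdsWithin_of_tendsto_nhds_of_eventually_within
    · have : Tendsto (fun y => Real.sqrt (y - c)) (nhds c) (nhds (Real.sqrt (c - c))) :=
        (Real.continuous_sqrt.comp (continuous_id.sub continuous_const)).continuousAt
      simpa using this.mono_left nhdsWithin_le_nhds
    · filter_upwards [self_mem_nhdsWithin] with y hy
      exact Real.sqrt_pos.mpr (by simp at hy ⊢; linarith)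
  constructor
  · have h := (ff_tendsto hα0 hα1).comp hsub
    apply h.congr'
    filter_upwards [self_mem_nhdsWithin] with y hy
    exact (a1_eq hα0 hα1 y (le_of_lt hy)).symm
  · -- L'Hopital part
    have hslope : Tendsto (fun s => gg α s / s) (nhdsWithin 0 (Ioi 0))
        (nhds (1 / (α ^ 2 * Real.sqrt (1 - α ^ 2)))) := by
      have h := (hasDerivAt_gg hα0 hα1)
      rw [hasDerivAt_iff_tendsto_slope] at h
      have hsubset : Ioi (0:ℝ) ⊆ {(0:ℝ)}ᶜ := fun x hx => by
        simp only [mem_compl_iff, mem_singleton_iff]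
        exact ne_of_gt hx
      have h' := h.mono_left (nhdsWithin_mono 0 hsubset)
      apply h'.congr'
      filter_upwards [self_mem_nhdsWithin] with s hs
      simp [slope, gg_zero hα0 hα1, div_eq_inv_mul]
    have hlhop : Tendsto (fun s => ff α s / s ^ 3) (nhdsWithin 0 (Ioi 0))
        (nhds (1 / (3 * α ^ 2 * Real.sqrt (1 - α ^ 2)))) := by
      apply HasDerivAt.lhopital_zero_right_on_Ioo (a := 0) (b := α)
        (f' := fun s => s * gg α s) (g' := fun s => 3 * s ^ 2) hα0
      · intro x hx
        exact hasDerivAt_ff hα0 hα1 x hx.1.le hx.2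
      · intro x hx
        simpa using hasDerivAt_pow 3 x
      · intro x hx
        have : (0:ℝ) < x := hx.1
        positivity
      · exact ff_tendsto hα0 hα1
      · have : Tendsto (fun s : ℝ => s ^ 3) (nhds 0) (nhds ((0:ℝ) ^ 3)) :=
          (continuous_pow 3).continuousAt
        simpa using this.mono_left nhdsWithin_le_nhds
      · have h3 : Tendsto (fun s => (1/3 : ℝ) * (gg α s / s)) (nhdsWithin 0 (Ioi 0))
            (nhds ((1/3 : ℝ) * (1 / (α ^ 2 * Real.sqrt (1 - α ^ 2))))) :=
          hslope.const_mul _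
        have heq : (1/3 : ℝ) * (1 / (α ^ 2 * Real.sqrt (1 - α ^ 2))) =
            1 / (3 * α ^ 2 * Real.sqrt (1 - α ^ 2)) := by ring
        rw [heq] at h3
        apply h3.congr'
        filter_upwards [self_mem_nhdsWithin] with s hs
        have hs0 : (s:ℝ) ≠ 0 := ne_of_gt hs
        field_simp
    have h := hlhop.comp hsub
    apply h.congr'
    filter_upwards [self_mem_nhdsWithin] with y hy
    have hy' : c < y := hy
    have hnn : (0:ℝ) ≤ y - c := by linarith
    have hpow : (y - 1 + α ^ 2) ^ ((3:ℝ)/2) = Real.sqrt (y - c) ^ 3 := by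
      have h1 : y - 1 + α ^ 2 = y - c := by rw [hcdef]; ring
      rw [h1, show ((3:ℝ)/2) = (1/2) * ((3:ℕ):ℝ) by norm_num, Real.rpow_mul hnn,
        ← Real.sqrt_eq_rpow, Real.rpow_natCast]
    simp only [Function.comp]
    rw [a1_eq hα0 hα1 y hy'.le, hpow]
  done
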